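/- Let a be an n×n complex upper triangular matrix and let E(a) denote its diagonal part. Then the eigenvalues of |a| log-majorize those of |E(a)|: for every k ∈ {1,…,n}, ∏_{i=1}^k s_i(E(a)) ≤ ∏_{i=1}^k s_i(a), and |det E(a)| ≤ |det a|, where s_i denotes decreasingly ordered singular values. -/

import Mathlib

open Matrix
open scoped ComplexOrder

/-- The absolute value `|x| = (xᴴ x)^(1/2)` of a complex matrix. -/
noncomputable def matAbs {m : Type*} [Fintype m] [DecidableEq m] (x : Matrix m m ℂ) : Matrix m m ℂ :=
  ((Matrix.posSemidef_conjTranspose_mul_self x).1.eigenvectorUnitary : Matrix m m ℂ) *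
    diagonal ((↑) ∘ (√·) ∘ (Matrix.posSemidef_conjTranspose_mul_self x).1.eigenvalues) *
    (star (Matrix.posSemidef_conjTranspose_mul_self x).1.eigenvectorUnitary : Matrix m m ℂ)

theorem matAbs_herm {m : Type*} [Fintype m] [DecidableEq m] (x : Matrix m m ℂ) :
    (matAbs x).IsHermitian := by
  unfold matAbs Matrix.IsHermitian
  simp [Matrix.conjTranspose_mul, Matrix.diagonal_conjTranspose, mul_assoc,
    Matrix.star_eq_conjTranspose, Pi.star_def, Complex.conj_ofReal, Function.comp_def]

/-- Functional calculus for a Hermitian matrix: apply `f : ℝ → ℝ` to the eigenvalues. -/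
noncomputable def herCFC {m : Type*} [Fintype m] [DecidableEq m] (x : Matrix m m ℂ)
    (hx : x.IsHermitian) (f : ℝ → ℝ) : Matrix m m ℂ :=
  (hx.eigenvectorUnitary : Matrix m m ℂ) *
    Matrix.diagonal (fun i => (f (hx.eigenvalues i) : ℂ)) *
    star (hx.eigenvectorUnitary : Matrix m m ℂ)

theorem herCFC_herm {m : Type*} [Fintype m] [DecidableEq m] (x : Matrix m m ℂ)
    (hx : x.IsHermitian) (f : ℝ → ℝ) : (herCFC x hx f).IsHermitian := by
  unfold herCFC Matrix.IsHermitian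
  simp [Matrix.conjTranspose_mul, Matrix.diagonal_conjTranspose, mul_assoc,
    Matrix.star_eq_conjTranspose, Pi.star_def, Complex.conj_ofReal]

/-- The power `|x|^p` of the absolute value of a matrix, via functional calculus. -/
noncomputable def matAbsPow {m : Type*} [Fintype m] [DecidableEq m] (x : Matrix m m ℂ) (p : ℝ) :
    Matrix m m ℂ :=
  herCFC (matAbs x) (matAbs_herm x) (fun t => t ^ p)

theorem matAbsPow_herm {m : Type*} [Fintype m] [DecidableEq m] (x : Matrix m m ℂ) (p : ℝ) :
    (matAbsPow x p).IsHermitian :=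
  herCFC_herm _ _ _

/-- Rearrangement of a tuple of reals in decreasing order. -/
noncomputable def sortDesc {n : ℕ} (f : Fin n → ℝ) : Fin n → ℝ :=
  fun i => f (Tuple.sort f i.rev)

/-- Decreasingly ordered eigenvalues of a Hermitian matrix. -/
noncomputable def eigsDesc {n : ℕ} {x : Matrix (Fin n) (Fin n) ℂ} (hx : x.IsHermitian) :
    Fin n → ℝ :=
  sortDesc hx.eigenvalues

/-- Decreasingly ordered singular values of a complex matrix. -/
noncomputable def svalsDesc {n : ℕ} (x : Matrix (Fin n) (Fin n) ℂ) : Fin n → ℝ :=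
  eigsDesc (matAbs_herm x)

/-! ### Auxiliary material: Cauchy–Binet -/

section CauchyBinet

open Equiv Equiv.Perm Finset Function

variable {R : Type*} [CommRing R]

lemma cb_aux {k n : ℕ} (M : Matrix (Fin k) (Fin n) R) (N : Matrix (Fin n) (Fin k) R)
    {p : Fin k → Fin n} (H : ¬Function.Injective p) :
    (∑ σ : Perm (Fin k), ((Equiv.Perm.sign σ : ℤ) : R) * ∏ x, M (σ x) (p x) * N (p x) x) = 0 := by
  obtain ⟨i, j, hpij, hij⟩ : ∃ i j, p i = p j ∧ i ≠ j := by
    rw [Injective] at H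
    push_neg at H
    exact H
  exact
    sum_involution (fun σ _ => σ * Equiv.swap i j)
      (fun σ _ => by
        have : (∏ x, M (σ x) (p x)) = ∏ x, M ((σ * Equiv.swap i j) x) (p x) :=
          Fintype.prod_equiv (swap i j) _ _ (by simp [apply_swap_eq_self hpij])
        simp [this, sign_swap hij, -sign_swap', prod_mul_distrib])
      (fun σ _ _ => (not_congr mul_swap_eq_iff).mpr hij) (fun _ _ => mem_univ _) fun σ _ =>
      mul_swap_involutive i j σ

lemma cb_expand {k n : ℕ} (M : Matrix (Fin k) (Fin n) R) (N : Matrix (Fin n) (Fin k) R) :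
    det (M * N) = ∑ p : Fin k → Fin n, ∑ σ : Perm (Fin k),
      ((Equiv.Perm.sign σ : ℤ) : R) * ∏ i, M (σ i) (p i) * N (p i) i := by
  simp only [det_apply']
  simp only [Matrix.mul_apply]
  simp only [prod_univ_sum, Fintype.piFinset_univ, mul_sum]
  exact Finset.sum_comm

lemma cb_inj {k n : ℕ} (M : Matrix (Fin k) (Fin n) R) (N : Matrix (Fin n) (Fin k) R) :
    det (M * N) = ∑ p ∈ Finset.univ.filter (fun p : Fin k → Fin n => Function.Injective p),
      ∑ σ : Perm (Fin k),
      ((Equiv.Perm.sign σ : ℤ) : R) * ∏ i, M (σ i) (p i) * N (p i) i := by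
  classical
  rw [cb_expand]
  refine (sum_subset (filter_subset _ _) fun f _ hinj => cb_aux M N ?_).symm
  simpa only [true_and, mem_filter, mem_univ] using hinj

/-- Cauchy–Binet, summing over strictly monotone maps. -/
theorem cauchyBinet {k n : ℕ} (M : Matrix (Fin k) (Fin n) R) (N : Matrix (Fin n) (Fin k) R) :
    det (M * N) = ∑ g ∈ Finset.univ.filter (fun g : Fin k → Fin n => StrictMono g),
      det (M.submatrix id g) * det (N.submatrix g id) := by
  classical
  rw [cb_inj]
  have key : ∀ g : Fin k → Fin n, StrictMono g →
      (∑ τ : Perm (Fin k), ∑ σ : Perm (Fin k),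
        ((Equiv.Perm.sign σ : ℤ) : R) * ∏ i, M (σ i) (g (τ i)) * N (g (τ i)) i)
      = det (M.submatrix id g) * det (N.submatrix g id) := by
    intro g hg
    rw [← det_mul, cb_inj]
    refine (Finset.sum_bij (fun p h => Equiv.ofBijective p
      (Finite.injective_iff_bijective.mp (mem_filter.1 h).2))
      (fun _ _ => mem_univ _) (fun _ _ _ _ h => by injection h)
      (fun b _ => ⟨b, mem_filter.2 ⟨mem_univ _, b.injective⟩, Equiv.coe_fn_injective rfl⟩)
      fun p hp => ?_).symm
    rfl
  have hsplit : ∑ p ∈ Finset.univ.filter (fun p : Fin k → Fin n => Function.Injective p),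
      (∑ σ : Perm (Fin k),
      ((Equiv.Perm.sign σ : ℤ) : R) * ∏ i, M (σ i) (p i) * N (p i) i)
      = ∑ x ∈ (Finset.univ.filter (fun g : Fin k → Fin n => StrictMono g)) ×ˢ
          (Finset.univ : Finset (Perm (Fin k))),
        (∑ σ : Perm (Fin k),
        ((Equiv.Perm.sign σ : ℤ) : R) * ∏ i, M (σ i) (x.1 (x.2 i)) * N (x.1 (x.2 i)) i) := by
    refine Finset.sum_bij' (fun p hp => (p ∘ Tuple.sort p, (Tuple.sort p)⁻¹))
      (fun x hx => x.1 ∘ x.2) ?_ ?_ ?_ ?_ ?_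
    · intro p hp
      have hinj : Function.Injective p := (mem_filter.1 hp).2
      refine Finset.mem_product.2 ⟨mem_filter.2 ⟨mem_univ _, ?_⟩, mem_univ _⟩
      exact (Tuple.monotone_sort p).strictMono_of_injective (hinj.comp (Tuple.sort p).injective)
    · intro x hx
      have hx1 := (mem_filter.1 (Finset.mem_product.1 hx).1).2
      exact mem_filter.2 ⟨mem_univ _, hx1.injective.comp x.2.injective⟩
    · intro p hp
      funext i
      simp
    · intro x hx
      have hx1 : StrictMono x.1 := (mem_filter.1 (Finset.mem_product.1 hx).1).2
      have hmono : x.1 ∘ x.2 ∘ Tuple.sort (x.1 ∘ x.2) = x.1 := by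
        have h1 : (x.1 ∘ x.2) ∘ Tuple.sort (x.1 ∘ x.2) = x.1 ∘ Tuple.sort x.1 :=
          Tuple.comp_perm_comp_sort_eq_comp_sort
        have h2 : Tuple.sort x.1 = Equiv.refl _ :=
          Tuple.sort_eq_refl_iff_monotone.mpr hx1.monotone
        calc x.1 ∘ x.2 ∘ Tuple.sort (x.1 ∘ x.2) = (x.1 ∘ x.2) ∘ Tuple.sort (x.1 ∘ x.2) := rfl
        _ = x.1 ∘ Tuple.sort x.1 := h1
        _ = x.1 := by rw [h2]; rfl
      have hsort : Tuple.sort (x.1 ∘ x.2) = x.2⁻¹ := by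
        symm
        rw [Tuple.eq_sort_iff]
        constructor
        · intro i j hij
          simpa using hx1.monotone hij
        · intro i j hij heq
          exfalso
          have : i = j := hx1.injective (by simpa using heq)
          exact absurd this hij.ne
      have h2 : (Tuple.sort (x.1 ∘ x.2))⁻¹ = x.2 := by rw [hsort]; simp
      exact Prod.ext hmono h2
    · intro p hp
      refine Finset.sum_congr rfl fun σ _ => ?_
      congr 1
      refine Finset.prod_congr rfl fun i _ => ?_
      simp
  rw [hsplit, Finset.sum_product, Finset.sum_congr rfl fun g hg => key g (mem_filter.1 hg).2]

/-- Gram version of Cauchy–Binet. -/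
theorem gramCB {k n : ℕ} (C : Matrix (Fin n) (Fin k) ℂ) :
    det (Cᴴ * C) = ((∑ g ∈ Finset.univ.filter (fun g : Fin k → Fin n => StrictMono g),
      ‖det (C.submatrix g id)‖ ^ 2 : ℝ) : ℂ) := by
  rw [cauchyBinet]
  push_cast
  refine Finset.sum_congr rfl fun g _ => ?_
  have h1 : Cᴴ.submatrix id g = (C.submatrix g id)ᴴ := by
    ext p q
    simp [Matrix.conjTranspose_apply]
  rw [h1, Matrix.det_conjTranspose, Complex.star_def, ← Complex.normSq_eq_conj_mul_self,
    Complex.normSq_eq_norm_sq, Complex.ofReal_pow]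

lemma submatrix_mul_submatrix {l l' n' m : Type*} {nn : Type*} [Fintype m]
    (A : Matrix l m R) (B : Matrix m nn R) (f : l' → l) (g : n' → nn) :
    (A * B).submatrix f g = A.submatrix f id * B.submatrix id g := by
  ext p q
  simp [Matrix.mul_apply]

end CauchyBinet

/-! ### Auxiliary material: sorting -/

section Sorting

lemma sortDesc_apply {n : ℕ} (f : Fin n → ℝ) (i : Fin n) :
    sortDesc f i = f ((Fin.revPerm.trans (Tuple.sort f)) i) := rfl

lemma sortDesc_antitone {n : ℕ} (f : Fin n → ℝ) : Antitone (sortDesc f) := by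
  intro i j hij
  exact Tuple.monotone_sort f (by simpa [Fin.rev_le_rev] using hij)

lemma sortDesc_nonneg {n : ℕ} {f : Fin n → ℝ} (hf : ∀ i, 0 ≤ f i) (i : Fin n) :
    0 ≤ sortDesc f i := hf _

lemma apply_eq_sortDesc {n : ℕ} (f : Fin n → ℝ) (i : Fin n) :
    f i = sortDesc f ((Fin.revPerm.trans (Tuple.sort f))⁻¹ i) := by
  rw [sortDesc_apply, Equiv.Perm.inv_def, Equiv.apply_symm_apply]

/-- Functions with the same value multiset have the same decreasing rearrangement. -/
lemma sortDesc_eq_of_multiset_eq {n : ℕ} {f g : Fin n → ℝ}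
    (h : Multiset.map f Finset.univ.val = Multiset.map g Finset.univ.val) :
    sortDesc f = sortDesc g := by
  have haux : ∀ u : Fin n → ℝ,
      Multiset.map (u ∘ Tuple.sort u) Finset.univ.val = Multiset.map u Finset.univ.val := by
    intro u
    have hperm0 : List.Perm (List.ofFn (⇑(Tuple.sort u))) (List.finRange n) := by
      have h0 := (Tuple.sort u).ofFn_comp_perm (id : Fin n → Fin n)
      simpa [List.ofFn_id, Function.id_comp] using h0
    have : Multiset.map (⇑(Tuple.sort u)) Finset.univ.val = Finset.univ.val := by
      rw [Fin.univ_val_map, Fin.univ_def]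
      exact Multiset.coe_eq_coe.mpr hperm0
    calc Multiset.map (u ∘ Tuple.sort u) Finset.univ.val
        = Multiset.map u (Multiset.map (⇑(Tuple.sort u)) Finset.univ.val) := by
          rw [Multiset.map_map]
      _ = Multiset.map u Finset.univ.val := by rw [this]
  have hperm : List.Perm (List.ofFn (f ∘ Tuple.sort f)) (List.ofFn (g ∘ Tuple.sort g)) := by
    rw [← Multiset.coe_eq_coe, ← Fin.univ_val_map, ← Fin.univ_val_map]
    rw [haux f, haux g]
    exact h
  have heq : f ∘ Tuple.sort f = g ∘ Tuple.sort g :=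
    List.ofFn_injective <| List.Perm.eq_of_sortedLE
      (Tuple.monotone_sort f).sortedLE_ofFn (Tuple.monotone_sort g).sortedLE_ofFn hperm
  funext i
  show (f ∘ Tuple.sort f) i.rev = (g ∘ Tuple.sort g) i.rev
  rw [heq]

/-- The product of the entries of an antitone nonnegative tuple over any `k` indices is at most
the product of the first `k` entries. -/
lemma prod_le_prod_first {n k : ℕ} (hk : k ≤ n) {s : Fin n → ℝ} (hs : Antitone s)
    (h0 : ∀ i, 0 ≤ s i) (u : Fin k → Fin n) (hu : Function.Injective u) :
    ∏ j : Fin k, s (u j) ≤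
      ∏ i ∈ Finset.univ.filter (fun i : Fin n => (i : ℕ) < k), s i := by
  classical
  set T : Finset (Fin n) := Finset.univ.image u with hT
  have hTcard : T.card = k := by
    rw [hT, Finset.card_image_of_injective _ hu, Finset.card_univ, Fintype.card_fin]
  set φ : Fin k → Fin n := ⇑(T.orderEmbOfFin hTcard) with hφ
  have hφmono : StrictMono φ := (T.orderEmbOfFin hTcard).strictMono
  have himg : Finset.univ.image φ = T := by
    ext x
    simp only [Finset.mem_image, Finset.mem_univ, true_and]
    constructor
    · rintro ⟨j, rfl⟩; exact Finset.orderEmbOfFin_mem T hTcard j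
    · intro hx
      have hx' : x ∈ Set.range φ := by
        rw [hφ, Finset.range_orderEmbOfFin]; exact hx
      obtain ⟨j, hj⟩ := hx'
      exact ⟨j, hj⟩
  have h1 : ∏ j : Fin k, s (u j) = ∏ i ∈ T, s i := by
    rw [hT, Finset.prod_image (fun x _ y _ h => hu h)]
  have h2 : ∏ i ∈ T, s i = ∏ j : Fin k, s (φ j) := by
    rw [← himg, Finset.prod_image (fun x _ y _ h => hφmono.injective h)]
  have h3 : ∏ i ∈ Finset.univ.filter (fun i : Fin n => (i : ℕ) < k), s i
      = ∏ j : Fin k, s (Fin.castLE hk j) := by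
    have hfilter : Finset.univ.filter (fun i : Fin n => (i : ℕ) < k)
        = Finset.univ.image (Fin.castLE hk) := by
      ext i
      simp only [Finset.mem_filter, Finset.mem_univ, true_and, Finset.mem_image]
      constructor
      · intro hi; exact ⟨⟨(i : ℕ), hi⟩, by ext; simp⟩
      · rintro ⟨j, rfl⟩; exact j.2
    rw [hfilter, Finset.prod_image (fun x _ y _ h => Fin.castLE_injective hk h)]
  rw [h1, h2, h3]
  have hle : ∀ m : ℕ, ∀ hm : m < k, m ≤ ((φ ⟨m, hm⟩ : Fin n) : ℕ) := by
    intro m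
    induction m with
    | zero => intro _; exact Nat.zero_le _
    | succ p ih =>
      intro hm
      have hp : p < k := Nat.lt_of_succ_lt hm
      have h1 := ih hp
      have h2 : φ ⟨p, hp⟩ < φ ⟨p + 1, hm⟩ := hφmono (by simp [Fin.lt_def])
      have h2' : ((φ ⟨p, hp⟩ : Fin n) : ℕ) < ((φ ⟨p + 1, hm⟩ : Fin n) : ℕ) := h2
      omega
  refine Finset.prod_le_prod (fun j _ => h0 _) fun j _ => ?_
  refine hs ?_
  show Fin.castLE hk j ≤ φ j
  rw [Fin.le_def]
  exact hle (j : ℕ) j.2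

end Sorting

/-! ### Auxiliary material: characteristic polynomials and eigenvalue multisets -/

section Charpoly

open Polynomial

lemma charpoly_conj_aux {n : ℕ} (U D V : Matrix (Fin n) (Fin n) ℂ)
    (hUV : U * V = 1) : (U * D * V).charpoly = D.charpoly := by
  have hmap : (U * D * V).charmatrix = U.map C * D.charmatrix * V.map C := by
    unfold Matrix.charmatrix
    rw [mul_sub, sub_mul]
    congr 1
    · calc Matrix.scalar (Fin n) (X : ℂ[X])
          = (U * V).map C * Matrix.scalar (Fin n) (X : ℂ[X]) := by
            rw [hUV]; simp [Matrix.map_one]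
        _ = U.map C * V.map C * Matrix.scalar (Fin n) (X : ℂ[X]) := by
            rw [Matrix.map_mul]
        _ = U.map C * Matrix.scalar (Fin n) (X : ℂ[X]) * V.map C := by
            rw [mul_assoc, mul_assoc]
            congr 1
            exact (Matrix.scalar_commute (n := Fin n) (X : ℂ[X])
              (fun r' => Commute.all _ _) (V.map C)).symm.symm.eq.symm
    · show (RingHom.mapMatrix (C : ℂ →+* ℂ[X])) (U * D * V)
          = U.map C * (RingHom.mapMatrix (C : ℂ →+* ℂ[X])) D * V.map C
      simp [RingHom.mapMatrix_apply, Matrix.map_mul]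
  unfold Matrix.charpoly
  rw [hmap, Matrix.det_mul, Matrix.det_mul, mul_comm, ← mul_assoc, mul_comm (V.map C).det,
    ← Matrix.det_mul, ← Matrix.map_mul, hUV]
  simp [Matrix.map_one]

lemma charpoly_diagonal_aux {n : ℕ} (d : Fin n → ℂ) :
    (Matrix.diagonal d).charpoly = ∏ i, (X - C (d i)) := by
  unfold Matrix.charpoly
  have hch : (Matrix.diagonal d).charmatrix
      = Matrix.diagonal (fun i => (X : ℂ[X]) - C (d i)) := by
    ext i j
    by_cases h : i = j
    · subst h; simp
    · rw [Matrix.charmatrix_apply_ne _ _ _ h, Matrix.diagonal_apply_ne _ h,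
        Matrix.diagonal_apply_ne _ h]
      simp
  rw [hch, Matrix.det_diagonal]

lemma herm_charpoly {n : ℕ} {M : Matrix (Fin n) (Fin n) ℂ} (hM : M.IsHermitian) :
    M.charpoly = ∏ i, (X - C ((hM.eigenvalues i : ℝ) : ℂ)) := by
  have hspec := hM.spectral_theorem
  rw [Unitary.conjStarAlgAut_apply] at hspec
  have hUV : (hM.eigenvectorUnitary : Matrix (Fin n) (Fin n) ℂ) *
      star (hM.eigenvectorUnitary : Matrix (Fin n) (Fin n) ℂ) = 1 :=
    Matrix.mem_unitaryGroup_iff.mp (hM.eigenvectorUnitary).2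
  calc M.charpoly
      = ((hM.eigenvectorUnitary : Matrix (Fin n) (Fin n) ℂ) *
          Matrix.diagonal (RCLike.ofReal ∘ hM.eigenvalues) *
          star (hM.eigenvectorUnitary : Matrix (Fin n) (Fin n) ℂ)).charpoly := by rw [← hspec]
    _ = (Matrix.diagonal (RCLike.ofReal ∘ hM.eigenvalues)).charpoly :=
        charpoly_conj_aux _ _ _ hUV
    _ = ∏ i, (X - C ((hM.eigenvalues i : ℝ) : ℂ)) := charpoly_diagonal_aux _

lemma eig_multiset_diag {n : ℕ} {w : Fin n → ℝ} {M : Matrix (Fin n) (Fin n) ℂ}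
    (hM : M.IsHermitian) (hMw : M = Matrix.diagonal (fun i => (w i : ℂ))) :
    Multiset.map hM.eigenvalues Finset.univ.val = Multiset.map w Finset.univ.val := by
  have h1 := herm_charpoly hM
  have h2 : M.charpoly = ∏ i, (X - C ((w i : ℂ))) := by rw [hMw]; exact charpoly_diagonal_aux _
  have r1 : ∀ (v : Fin n → ℂ), (∏ i, (X - C (v i)))
      = ((Multiset.map v Finset.univ.val).map (fun a => X - C a)).prod := by
    intro v; rw [Multiset.map_map]; rfl
  have h3 := congrArg Polynomial.roots (h1.symm.trans h2)
  rw [r1, r1, Polynomial.roots_multiset_prod_X_sub_C, Polynomial.roots_multiset_prod_X_sub_C]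
    at h3
  have h4 : Multiset.map (fun r : ℝ => (r : ℂ)) (Multiset.map hM.eigenvalues Finset.univ.val)
      = Multiset.map (fun r : ℝ => (r : ℂ)) (Multiset.map w Finset.univ.val) := by
    rw [Multiset.map_map, Multiset.map_map]; exact h3
  exact Multiset.map_injective Complex.ofReal_injective h4

lemma matAbs_mul_self {m : Type*} [Fintype m] [DecidableEq m] (x : Matrix m m ℂ) :
    matAbs x * matAbs x = xᴴ * x := by
  have hV2 : star ((Matrix.posSemidef_conjTranspose_mul_self x).1.eigenvectorUnitary : Matrix m m ℂ)
      * ((Matrix.posSemidef_conjTranspose_mul_self x).1.eigenvectorUnitary : Matrix m m ℂ) = 1 :=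
    Matrix.mem_unitaryGroup_iff'.mp (Matrix.posSemidef_conjTranspose_mul_self x).1.eigenvectorUnitary.2
  have hspec := (Matrix.posSemidef_conjTranspose_mul_self x).1.spectral_theorem
  rw [Unitary.conjStarAlgAut_apply] at hspec
  have hdd : diagonal (fun i => (((√((Matrix.posSemidef_conjTranspose_mul_self x).1.eigenvalues i)) : ℝ) : ℂ))
      * diagonal (fun i => (((√((Matrix.posSemidef_conjTranspose_mul_self x).1.eigenvalues i)) : ℝ) : ℂ))
      = diagonal (RCLike.ofReal ∘ (Matrix.posSemidef_conjTranspose_mul_self x).1.eigenvalues) := by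
    rw [diagonal_mul_diagonal]
    congr 1
    funext i
    rw [← Complex.ofReal_mul,
      Real.mul_self_sqrt ((Matrix.posSemidef_conjTranspose_mul_self x).eigenvalues_nonneg i)]
    rfl
  have key : ∀ (V D E : Matrix m m ℂ), star V * V = 1 → D * D = E →
      V * D * star V * (V * D * star V) = V * E * star V := by
    intro V D E h1 h2
    rw [← h2]
    simp only [Matrix.mul_assoc]
    rw [← Matrix.mul_assoc (star V) V, h1, Matrix.one_mul]
  unfold matAbs
  conv_rhs => rw [hspec]
  exact key _ _ _ hV2 hdd

lemma matAbs_eig_multiset {n : ℕ} (x : Matrix (Fin n) (Fin n) ℂ) :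
    Multiset.map (matAbs_herm x).eigenvalues Finset.univ.val
      = Multiset.map (fun i => √((Matrix.posSemidef_conjTranspose_mul_self x).1.eigenvalues i))
          Finset.univ.val := by
  have h1 := herm_charpoly (matAbs_herm x)
  have hUV := Matrix.mem_unitaryGroup_iff.mp
    (Matrix.posSemidef_conjTranspose_mul_self x).1.eigenvectorUnitary.2
  have h2 : (matAbs x).charpoly = ∏ i, (X - C (((√((Matrix.posSemidef_conjTranspose_mul_self
      x).1.eigenvalues i) : ℝ) : ℂ))) := by
    unfold matAbs
    exact (charpoly_conj_aux _ _ _ hUV).trans (charpoly_diagonal_aux _)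
  have r1 : ∀ (v : Fin n → ℂ), (∏ i, (X - C (v i)))
      = ((Multiset.map v Finset.univ.val).map (fun a => X - C a)).prod := by
    intro v; rw [Multiset.map_map]; rfl
  have h3 := congrArg Polynomial.roots (h1.symm.trans h2)
  rw [r1, r1, Polynomial.roots_multiset_prod_X_sub_C, Polynomial.roots_multiset_prod_X_sub_C]
    at h3
  have h4 : Multiset.map (fun r : ℝ => (r : ℂ)) (Multiset.map (matAbs_herm x).eigenvalues
      Finset.univ.val)
      = Multiset.map (fun r : ℝ => (r : ℂ)) (Multiset.map
        (fun i => √((Matrix.posSemidef_conjTranspose_mul_self x).1.eigenvalues i))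
          Finset.univ.val) := by
    rw [Multiset.map_map, Multiset.map_map]; exact h3
  exact Multiset.map_injective Complex.ofReal_injective h4

lemma svalsDesc_diagonal {n : ℕ} (v : Fin n → ℂ) :
    svalsDesc (Matrix.diagonal v) = sortDesc (fun i => ‖v i‖) := by
  show sortDesc (matAbs_herm (Matrix.diagonal v)).eigenvalues = _
  apply sortDesc_eq_of_multiset_eq
  rw [matAbs_eig_multiset]
  have hDD : (Matrix.diagonal v)ᴴ * Matrix.diagonal v
      = Matrix.diagonal (fun i => (((‖v i‖ ^ 2 : ℝ)) : ℂ)) := by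
    rw [Matrix.diagonal_conjTranspose, Matrix.diagonal_mul_diagonal]
    congr 1
    funext i
    simp only [Pi.star_apply, RCLike.star_def]
    rw [mul_comm, Complex.mul_conj, Complex.normSq_eq_norm_sq]
  have hm := eig_multiset_diag (Matrix.posSemidef_conjTranspose_mul_self (Matrix.diagonal v)).1 hDD
  calc Multiset.map (fun i => √((Matrix.posSemidef_conjTranspose_mul_self
        (Matrix.diagonal v)).1.eigenvalues i)) Finset.univ.val
      = Multiset.map Real.sqrt (Multiset.map (Matrix.posSemidef_conjTranspose_mul_self
        (Matrix.diagonal v)).1.eigenvalues Finset.univ.val) := by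
        rw [Multiset.map_map]; rfl
    _ = Multiset.map Real.sqrt (Multiset.map (fun i => ‖v i‖ ^ 2) Finset.univ.val) := by rw [hm]
    _ = Multiset.map (fun i => ‖v i‖) Finset.univ.val := by
        rw [Multiset.map_map]
        congr 1
        funext i
        simp [Real.sqrt_sq (norm_nonneg (v i))]

end Charpoly

/-! ### The main theorem -/

/-- **Log-majorization for the diagonal part of an upper triangular matrix.** If `a` is upper
triangular with diagonal part `E(a)`, then `∏_{i<k} sᵢ(E(a)) ≤ ∏_{i<k} sᵢ(a)` for each `k`,
and `|det E(a)| ≤ |det a|`. -/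
theorem svals_diag_log_majorize (n : ℕ) (a : Matrix (Fin n) (Fin n) ℂ)
    (ha : ∀ i j : Fin n, j < i → a i j = 0) :
    (∀ k : ℕ, k ≤ n →
      ∏ i ∈ Finset.univ.filter (fun i : Fin n => (i : ℕ) < k),
          svalsDesc (Matrix.diagonal fun i => a i i) i ≤
        ∏ i ∈ Finset.univ.filter (fun i : Fin n => (i : ℕ) < k), svalsDesc a i) ∧
    ‖(Matrix.diagonal fun i => a i i).det‖ ≤ ‖a.det‖ := by
  classical
  have hdeta : a.det = ∏ i, a i i :=
    Matrix.det_of_upperTriangular (fun i j h => ha i j h)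
  constructor
  · intro k hk
    set v : Fin n → ℂ := fun i => a i i with hv
    set w : Fin n → ℝ := fun i => ‖v i‖ with hw
    set d : Fin n → ℝ := (matAbs_herm a).eigenvalues with hd
    have hd0 : ∀ i, 0 ≤ d i := fun i => by
      have hm := Multiset.mem_map_of_mem (matAbs_herm a).eigenvalues
        (Finset.mem_def.mp (Finset.mem_univ i))
      rw [matAbs_eig_multiset a] at hm
      obtain ⟨j, _, hj⟩ := Multiset.mem_map.mp hm
      show 0 ≤ (matAbs_herm a).eigenvalues i
      rw [← hj]
      exact Real.sqrt_nonneg _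
    set P : ℝ := ∏ i ∈ Finset.univ.filter (fun i : Fin n => (i : ℕ) < k), sortDesc d i with hP
    have hP0 : 0 ≤ P := Finset.prod_nonneg fun i _ => sortDesc_nonneg hd0 i
    -- the index set realizing the top-k values of w
    set e : Equiv.Perm (Fin n) := Fin.revPerm.trans (Tuple.sort w) with he
    set u : Fin k → Fin n := fun j => e (Fin.castLE hk j) with hu
    have huinj : Function.Injective u :=
      fun x y hxy => Fin.castLE_injective hk (e.injective hxy)
    set T : Finset (Fin n) := Finset.univ.image u with hTdef
    have hT : T.card = k := by
      rw [hTdef, Finset.card_image_of_injective _ huinj, Finset.card_univ, Fintype.card_fin]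
    set ι : Fin k → Fin n := ⇑(T.orderEmbOfFin hT) with hι
    have hιmono : StrictMono ι := (T.orderEmbOfFin hT).strictMono
    have himgι : Finset.univ.image ι = T := by
      ext x
      simp only [Finset.mem_image, Finset.mem_univ, true_and]
      constructor
      · rintro ⟨j, rfl⟩; exact Finset.orderEmbOfFin_mem T hT j
      · intro hx
        have hx' : x ∈ Set.range ι := by
          rw [hι, Finset.range_orderEmbOfFin]; exact hx
        obtain ⟨j, hj⟩ := hx'
        exact ⟨j, hj⟩
    -- LHS equals |det B| for B the principal submatrix of a on T
    set B : Matrix (Fin k) (Fin k) ℂ := a.submatrix ι ι with hB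
    have hdetB : B.det = ∏ j : Fin k, v (ι j) :=
      Matrix.det_of_upperTriangular (fun p q h => ha (ι p) (ι q) (hιmono h))
    have hLHS : (∏ i ∈ Finset.univ.filter (fun i : Fin n => (i : ℕ) < k),
        svalsDesc (Matrix.diagonal v) i) = ‖B.det‖ := by
      rw [svalsDesc_diagonal v]
      have hfilter : Finset.univ.filter (fun i : Fin n => (i : ℕ) < k)
          = Finset.univ.image (Fin.castLE hk) := by
        ext i
        simp only [Finset.mem_filter, Finset.mem_univ, true_and, Finset.mem_image]
        constructor
        · intro hi; exact ⟨⟨(i : ℕ), hi⟩, by ext; simp⟩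
        · rintro ⟨j, rfl⟩; exact j.2
      have e1 : ∏ i ∈ Finset.univ.filter (fun i : Fin n => (i : ℕ) < k),
          sortDesc (fun i => ‖v i‖) i = ∏ j : Fin k, w (u j) := by
        rw [hfilter, Finset.prod_image (fun x _ y _ h => Fin.castLE_injective hk h)]
        rfl
      have e2 : ∏ j : Fin k, w (u j) = ∏ i ∈ T, w i := by
        rw [hTdef, Finset.prod_image (fun x _ y _ h => huinj h)]
      have e3 : ∏ i ∈ T, w i = ∏ j : Fin k, w (ι j) := by
        rw [← himgι, Finset.prod_image (fun x _ y _ h => hιmono.injective h)]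
      rw [e1, e2, e3, hdetB]
      rw [norm_prod]
    rw [hLHS]
    have hRHS : (∏ i ∈ Finset.univ.filter (fun i : Fin n => (i : ℕ) < k), svalsDesc a i)
        = P := rfl
    rw [hRHS]
    -- now prove |det B| ≤ P
    set C0 : Matrix (Fin n) (Fin k) ℂ := a.submatrix id ι with hC0
    set SM : Finset (Fin k → Fin n) :=
      Finset.univ.filter (fun g : Fin k → Fin n => StrictMono g) with hSM
    set r : ℝ := ∑ g ∈ SM, ‖det (C0.submatrix g id)‖ ^ 2 with hr
    have hgram : det (C0ᴴ * C0) = (r : ℂ) := gramCB C0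
    have hmem : ι ∈ SM := Finset.mem_filter.mpr ⟨Finset.mem_univ _, hιmono⟩
    have h5 : ‖B.det‖ ^ 2 ≤ r := by
      have : B = C0.submatrix ι id := rfl
      rw [this, hr]
      exact Finset.single_le_sum (f := fun g => ‖det (C0.submatrix g id)‖ ^ 2)
        (fun g _ => sq_nonneg _) hmem
    -- spectral decomposition of |a|
    set U : Matrix (Fin n) (Fin n) ℂ :=
      (Matrix.IsHermitian.eigenvectorUnitary (matAbs_herm a) : Matrix (Fin n) (Fin n) ℂ)
      with hUdef
    set Dc : Matrix (Fin n) (Fin n) ℂ := Matrix.diagonal (RCLike.ofReal ∘ d) with hDc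
    have hspec : matAbs a = U * Dc * star U := (matAbs_herm a).spectral_theorem
    have hU1 : U * star U = 1 :=
      Matrix.mem_unitaryGroup_iff.mp ((matAbs_herm a).eigenvectorUnitary).2
    have hU2 : star U * U = 1 :=
      Matrix.mem_unitaryGroup_iff'.mp ((matAbs_herm a).eigenvectorUnitary).2
    set Z : Matrix (Fin n) (Fin k) ℂ := (star U).submatrix id ι with hZ
    have haa : aᴴ * a = U * (Dc * Dc) * star U := by
      have h0 : aᴴ * a = matAbs a * matAbs a :=
        (matAbs_mul_self a).symm
      rw [h0, hspec]
      have hstep : (U * Dc * star U) * (U * Dc * star U)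
          = U * (Dc * ((star U * U) * (Dc * star U))) := by
        simp only [Matrix.mul_assoc]
      rw [hstep, hU2, Matrix.one_mul]
      simp only [Matrix.mul_assoc]
    have hZH : Zᴴ = U.submatrix ι id := by
      rw [hZ, Matrix.conjTranspose_submatrix]
      congr 1
      simp [Matrix.star_eq_conjTranspose]
    have hDcH : Dcᴴ = Dc := by
      rw [hDc, Matrix.diagonal_conjTranspose]
      refine congrArg _ (funext fun i => ?_)
      simp [Pi.star_apply, RCLike.star_def, Complex.conj_ofReal]
    have hCC : C0ᴴ * C0 = U.submatrix ι id * (Dc * Dc) * Z := by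
      have h1 : C0ᴴ = aᴴ.submatrix ι id := by
        rw [hC0, Matrix.conjTranspose_submatrix]
      rw [h1, hC0, ← submatrix_mul_submatrix aᴴ a ι ι, haa,
        submatrix_mul_submatrix (U * (Dc * Dc)) (star U) ι ι,
        submatrix_mul_submatrix U (Dc * Dc) ι id]
      rw [Matrix.submatrix_id_id]
    have hWW : (Dc * Z)ᴴ * (Dc * Z) = C0ᴴ * C0 := by
      rw [Matrix.conjTranspose_mul, hDcH, hZH, hCC]
      simp only [Matrix.mul_assoc]
    have hZZ : Zᴴ * Z = 1 := by
      rw [hZH, hZ, ← submatrix_mul_submatrix U (star U) ι ι, hU1]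
      ext p q
      by_cases h : p = q
      · subst h; simp [Matrix.one_apply]
      · have : ι p ≠ ι q := fun hc => h (hιmono.injective hc)
        simp [Matrix.one_apply, h, this]
    have hsumZ : ∑ g ∈ SM, ‖det (Z.submatrix g id)‖ ^ 2 = 1 := by
      have hgz := gramCB Z
      rw [hZZ, Matrix.det_one] at hgz
      exact_mod_cast hgz.symm
    have hterm : ∀ g ∈ SM, ‖det ((Dc * Z).submatrix g id)‖ ^ 2
        ≤ P ^ 2 * ‖det (Z.submatrix g id)‖ ^ 2 := by
      intro g hg
      have hgsm : StrictMono g := (Finset.mem_filter.mp hg).2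
      have hsub : (Dc * Z).submatrix g id
          = Matrix.diagonal (fun p => ((d (g p) : ℝ) : ℂ)) * Z.submatrix g id := by
        ext p q
        rw [Matrix.submatrix_apply, Matrix.diagonal_mul, Matrix.diagonal_mul]
        rfl
      have habs : ‖det (Matrix.diagonal (fun p => ((d (g p) : ℝ) : ℂ)))‖
          = ∏ p : Fin k, d (g p) := by
        rw [Matrix.det_diagonal, ← Complex.ofReal_prod, Complex.norm_of_nonneg (Finset.prod_nonneg fun p _ => hd0 _)]
      have hPle : ∏ p : Fin k, d (g p) ≤ P := by
        set ed : Equiv.Perm (Fin n) := Fin.revPerm.trans (Tuple.sort d) with hed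
        have hrw : ∀ x, d x = sortDesc d (ed⁻¹ x) := fun x => apply_eq_sortDesc d x
        calc ∏ p : Fin k, d (g p) = ∏ p : Fin k, sortDesc d (ed⁻¹ (g p)) :=
              Finset.prod_congr rfl (fun p _ => hrw _)
          _ ≤ P := prod_le_prod_first hk (sortDesc_antitone d) (sortDesc_nonneg hd0)
              (fun p => ed⁻¹ (g p)) ((ed⁻¹).injective.comp hgsm.injective)
      rw [hsub, Matrix.det_mul, norm_mul, mul_pow, habs]
      exact mul_le_mul_of_nonneg_right
        (pow_le_pow_left₀ (Finset.prod_nonneg fun p _ => hd0 _) hPle 2) (sq_nonneg _)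
    have hrW : r = ∑ g ∈ SM, ‖det ((Dc * Z).submatrix g id)‖ ^ 2 := by
      have h2 := gramCB (Dc * Z)
      rw [hWW, hgram] at h2
      exact_mod_cast h2
    have hrP : r ≤ P ^ 2 := by
      rw [hrW]
      calc ∑ g ∈ SM, ‖det ((Dc * Z).submatrix g id)‖ ^ 2
          ≤ ∑ g ∈ SM, P ^ 2 * ‖det (Z.submatrix g id)‖ ^ 2 :=
            Finset.sum_le_sum hterm
        _ = P ^ 2 * ∑ g ∈ SM, ‖det (Z.submatrix g id)‖ ^ 2 := by
            rw [Finset.mul_sum]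
        _ = P ^ 2 := by rw [hsumZ, mul_one]
    nlinarith [norm_nonneg B.det, h5, hrP, hP0]
  · rw [hdeta, Matrix.det_diagonal]
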